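/- The group G₁ of order 64 with presentation ⟨a, b | a^16 = 1, b^4 = 1, [b,a] = a^4⟩ does not satisfy property (*); that is, G₁ does not embed as a subgroup of index 2 in any group generated by involutions. -/

import Mathlib

/-- A group `G` satisfies property (*) if it embeds as a subgroup of index 2 in
some group `Γ` generated by involutions (elements of order exactly 2). -/
def SatisfiesStar (G : Type*) [Group G] : Prop :=
  ∃ (Γ : Type) (_ : Group Γ) (f : G →* Γ),
    Function.Injective f ∧ f.range.index = 2 ∧
    Subgroup.closure {x : Γ | orderOf x = 2} = ⊤

/-- The relators of the presentation `⟨a, b | a^16, b^4, [b,a] = a^4⟩`, where `a` is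
`FreeGroup.of true`, `b` is `FreeGroup.of false`, and `[b,a] = b⁻¹a⁻¹ba`. -/
def G1Rels : Set (FreeGroup Bool) :=
  { FreeGroup.of true ^ 16,
    FreeGroup.of false ^ 4,
    (FreeGroup.of false)⁻¹ * (FreeGroup.of true)⁻¹ * FreeGroup.of false *
      FreeGroup.of true * (FreeGroup.of true ^ 4)⁻¹ }

/-- The group `G₁ = ⟨a, b | a^16, b^4, [b,a] = a^4⟩` of order 64. -/
abbrev G1 : Type := PresentedGroup G1Rels

def pw (n : ZMod 4) : ZMod 16 := 5 ^ n.val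

lemma pw_add : ∀ x y : ZMod 4, pw (x + y) = pw x * pw y := by decide
lemma pw_zero : pw 0 = 1 := by decide

structure Gc where
  m : ZMod 16
  n : ZMod 4
deriving DecidableEq, Fintype

namespace Gc

instance : Mul Gc := ⟨fun a b => ⟨a.m + pw a.n * b.m, a.n + b.n⟩⟩
instance : One Gc := ⟨⟨0, 0⟩⟩
instance : Inv Gc := ⟨fun a => ⟨-(pw (-a.n) * a.m), -a.n⟩⟩

@[simp] lemma mul_m (a b : Gc) : (a * b).m = a.m + pw a.n * b.m := rfl
@[simp] lemma mul_n (a b : Gc) : (a * b).n = a.n + b.n := rfl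
@[simp] lemma one_m : (1 : Gc).m = 0 := rfl
@[simp] lemma one_n : (1 : Gc).n = 0 := rfl
@[simp] lemma inv_m (a : Gc) : (a⁻¹).m = -(pw (-a.n) * a.m) := rfl
@[simp] lemma inv_n (a : Gc) : (a⁻¹).n = -a.n := rfl

lemma ext' {a b : Gc} (h1 : a.m = b.m) (h2 : a.n = b.n) : a = b := by
  cases a; cases b; cases h1; cases h2; rfl

instance : Group Gc where
  mul_assoc a b c := ext' (by simp [pw_add]; ring) (by simp [add_assoc])
  one_mul a := ext' (by simp [pw_zero]) (by simp)
  mul_one a := ext' (by simp) (by simp)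
  inv_mul_cancel a := ext' (by simp) (by simp)

end Gc

def A₀ : Gc := ⟨1, 0⟩
def B₀ : Gc := ⟨0, 1⟩

example : A₀ ^ 16 = 1 := by decide
example : B₀ ^ 4 = 1 := by decide
example : B₀⁻¹ * A₀⁻¹ * B₀ * A₀ * (A₀ ^ 4)⁻¹ = 1 := by decide

def r4 (x : ZMod 16) : ZMod 4 := (x.val : ZMod 4)
def r2 (x : ZMod 4) : ZMod 2 := (x.val : ZMod 2)

set_option maxRecDepth 40000 in
set_option maxHeartbeats 4000000 in
lemma mainClaim : ∀ α β : Gc,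
    β⁻¹ * α⁻¹ * β * α = α ^ 4 → β ^ 4 = 1 →
    r4 α.m * r4 α.m + r4 β.m * α.n = 1 →
    r4 α.m * r4 β.m + r4 β.m * β.n = 0 →
    α.n * r4 α.m + β.n * α.n = 0 →
    α.n * r4 β.m + β.n * β.n = 1 →
    ∃ ε1 ε2 : ZMod 2, ¬(ε1 = 0 ∧ ε2 = 0) ∧
      (ε1 * r2 (r4 α.m) + ε2 * r2 α.n = ε1) ∧
      (ε1 * r2 (r4 β.m) + ε2 * r2 β.n = ε2) ∧
      (∀ x y : ZMod 4, x + (r4 α.m * x + r4 β.m * y) = 0 →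
        y + (α.n * x + β.n * y) = 0 → ε1 * r2 x + ε2 * r2 y = 0) := by decide

namespace Work

def a₀ : G1 := PresentedGroup.of true
def b₀ : G1 := PresentedGroup.of false

lemma mk_rel {r : FreeGroup Bool} (h : r ∈ G1Rels) : PresentedGroup.mk G1Rels r = 1 :=
  (QuotientGroup.eq_one_iff _).mpr (Subgroup.subset_normalClosure h)

lemma rel_b : b₀ ^ 4 = 1 := by
  have := mk_rel (r := FreeGroup.of false ^ 4) (by simp [G1Rels])
  rwa [map_pow] at this

lemma rel_c : b₀⁻¹ * a₀⁻¹ * b₀ * a₀ = a₀ ^ 4 := by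
  have := mk_rel (r := (FreeGroup.of false)⁻¹ * (FreeGroup.of true)⁻¹ * FreeGroup.of false *
      FreeGroup.of true * (FreeGroup.of true ^ 4)⁻¹) (by simp [G1Rels])
  simp only [map_mul, map_inv, map_pow] at this
  rw [mul_inv_eq_one] at this
  exact this

/-- the projection to the concrete group -/
def π : G1 →* Gc :=
  PresentedGroup.toGroup (f := fun x => cond x A₀ B₀) (by
    intro r hr
    simp only [G1Rels, Set.mem_insert_iff, Set.mem_singleton_iff] at hr
    rcases hr with rfl | rfl | rfl <;>
      simp only [map_mul, map_inv, map_pow, FreeGroup.lift_apply_of] <;> decide)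

@[simp] lemma π_a : π a₀ = A₀ := PresentedGroup.toGroup.of _
@[simp] lemma π_b : π b₀ = B₀ := PresentedGroup.toGroup.of _

end Work

namespace Work

set_option maxRecDepth 10000 in
lemma r4_mul : ∀ g h : Gc, r4 (g * h).m = r4 g.m + r4 h.m := by decide

/-- first character Gc → Z4 -/
def χa : Gc →* Multiplicative (ZMod 4) where
  toFun g := Multiplicative.ofAdd (r4 g.m)
  map_one' := by decide
  map_mul' g h := by
    simp only [← ofAdd_add, r4_mul]

/-- second character Gc → Z4 -/
def χb : Gc →* Multiplicative (ZMod 4) where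
  toFun g := Multiplicative.ofAdd g.n
  map_one' := by decide
  map_mul' g h := by simp only [← ofAdd_add]; rfl

def X : G1 →* Multiplicative (ZMod 4) := χa.comp π
def Y : G1 →* Multiplicative (ZMod 4) := χb.comp π

lemma X_a : X a₀ = Multiplicative.ofAdd 1 := by simp [X, χa]; rfl
lemma Y_a : Y a₀ = Multiplicative.ofAdd 0 := by simp [Y, χb]; rfl
lemma X_b : X b₀ = Multiplicative.ofAdd 0 := by simp [X, χa]; rfl
lemma Y_b : Y b₀ = Multiplicative.ofAdd 1 := by simp [Y, χb]; rfl

end Work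

namespace Work

/-- combination character -/
def cmb (c d : ZMod 4) : G1 →* Multiplicative (ZMod 4) where
  toFun v := Multiplicative.ofAdd (c * (X v).toAdd + d * (Y v).toAdd)
  map_one' := by simp
  map_mul' u v := by
    simp only [map_mul, toAdd_mul, ← ofAdd_add]
    ring_nf

@[simp] lemma cmb_apply (c d : ZMod 4) (v : G1) :
    cmb c d v = Multiplicative.ofAdd (c * (X v).toAdd + d * (Y v).toAdd) := rfl

lemma X_val (v : G1) : X v = Multiplicative.ofAdd (r4 (π v).m) := rfl
lemma Y_val (v : G1) : Y v = Multiplicative.ofAdd ((π v).n) := rfl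

section Sigma

variable (S : G1 →* G1)

lemma hextX : X.comp S = cmb (r4 (π (S a₀)).m) (r4 (π (S b₀)).m) := by
  apply PresentedGroup.ext
  intro x
  cases x <;> simp only [MonoidHom.comp_apply, cmb_apply] <;>
    [ (rw [show (PresentedGroup.of false : G1) = b₀ from rfl, X_b, Y_b, X_val]; simp);
      (rw [show (PresentedGroup.of true : G1) = a₀ from rfl, X_a, Y_a, X_val]; simp)]

lemma hextY : Y.comp S = cmb ((π (S a₀)).n) ((π (S b₀)).n) := by
  apply PresentedGroup.ext
  intro x
  cases x <;> simp only [MonoidHom.comp_apply, cmb_apply] <;>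
    [ (rw [show (PresentedGroup.of false : G1) = b₀ from rfl, X_b, Y_b, Y_val]; simp);
      (rw [show (PresentedGroup.of true : G1) = a₀ from rfl, X_a, Y_a, Y_val]; simp)]

lemma hX' (v : G1) : (X (S v)).toAdd
    = r4 (π (S a₀)).m * (X v).toAdd + r4 (π (S b₀)).m * (Y v).toAdd := by
  have := congrArg (fun f => Multiplicative.toAdd (f v)) (hextX S)
  simpa using this

lemma hY' (v : G1) : (Y (S v)).toAdd
    = (π (S a₀)).n * (X v).toAdd + (π (S b₀)).n * (Y v).toAdd := by
  have := congrArg (fun f => Multiplicative.toAdd (f v)) (hextY S)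
  simpa using this

end Sigma


end Work

namespace Work

lemma r2_add : ∀ x y : ZMod 4, r2 (x + y) = r2 x + r2 y := by decide
lemma r2_mul : ∀ x y : ZMod 4, r2 (x * y) = r2 x * r2 y := by decide
lemma r2_two : ∀ x : ZMod 4, x + x = 0 → r2 x = 0 := by decide
lemma r2_one : r2 1 = 1 := by decide
lemma r2_zero : r2 0 = 0 := by decide

lemma exists_eps (S : G1 →* G1) (hSS : ∀ v, S (S v) = v) :
    ∃ ε1 ε2 : ZMod 2, ¬(ε1 = 0 ∧ ε2 = 0) ∧
      (∀ v, ε1 * r2 (X (S v)).toAdd + ε2 * r2 (Y (S v)).toAdd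
          = ε1 * r2 (X v).toAdd + ε2 * r2 (Y v).toAdd) ∧
      (∀ v : G1, v * v = 1 → ε1 * r2 (X v).toAdd + ε2 * r2 (Y v).toAdd = 0) ∧
      (∀ v : G1, v * S v = 1 → ε1 * r2 (X v).toAdd + ε2 * r2 (Y v).toAdd = 0) ∧
      (ε1 * r2 (X a₀).toAdd + ε2 * r2 (Y a₀).toAdd = ε1) ∧
      (ε1 * r2 (X b₀).toAdd + ε2 * r2 (Y b₀).toAdd = ε2) := by
  set α : Gc := π (S a₀) with hα
  set β : Gc := π (S b₀) with hβ
  -- the four abelianized matrix entries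
  have hXa : (X (S a₀)).toAdd = r4 α.m := rfl
  have hYa : (Y (S a₀)).toAdd = α.n := rfl
  have hXb : (X (S b₀)).toAdd = r4 β.m := rfl
  have hYb : (Y (S b₀)).toAdd = β.n := rfl
  have hXa0 : (X a₀).toAdd = 1 := by rw [X_a]; rfl
  have hYa0 : (Y a₀).toAdd = 0 := by rw [Y_a]; rfl
  have hXb0 : (X b₀).toAdd = 0 := by rw [X_b]; rfl
  have hYb0 : (Y b₀).toAdd = 1 := by rw [Y_b]; rfl
  -- relation hypotheses for the concrete claim
  have h1 : β⁻¹ * α⁻¹ * β * α = α ^ 4 := by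
    have := congrArg (π.comp S) rel_c
    simpa [map_mul, map_inv, map_pow, hα, hβ] using this
  have h2 : β ^ 4 = 1 := by
    have := congrArg (π.comp S) rel_b
    simpa [map_pow, hβ] using this
  have h3 : r4 α.m * r4 α.m + r4 β.m * α.n = 1 := by
    have := hX' S (S a₀)
    rw [hSS a₀, hXa0, hXa, hYa] at this
    exact this.symm
  have h4 : r4 α.m * r4 β.m + r4 β.m * β.n = 0 := by
    have := hX' S (S b₀)
    rw [hSS b₀, hXb0, hXb, hYb] at this
    exact this.symm
  have h5 : α.n * r4 α.m + β.n * α.n = 0 := by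
    have := hY' S (S a₀)
    rw [hSS a₀, hYa0, hXa, hYa] at this
    exact this.symm
  have h6 : α.n * r4 β.m + β.n * β.n = 1 := by
    have := hY' S (S b₀)
    rw [hSS b₀, hYb0, hXb, hYb] at this
    exact this.symm
  obtain ⟨ε1, ε2, hne, hb1, hb2, hker⟩ := mainClaim α β h1 h2 h3 h4 h5 h6
  refine ⟨ε1, ε2, hne, ?_, ?_, ?_, ?_, ?_⟩
  · intro v
    rw [hX' S v, hY' S v, ← hα, ← hβ, r2_add, r2_add, r2_mul, r2_mul, r2_mul, r2_mul]
    linear_combination (r2 (X v).toAdd) * hb1 + (r2 (Y v).toAdd) * hb2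
  · intro v hv
    have hx : (X v).toAdd + (X v).toAdd = 0 := by
      have := congrArg (fun u => (X u).toAdd) hv
      simpa [map_mul, toAdd_mul] using this
    have hy : (Y v).toAdd + (Y v).toAdd = 0 := by
      have := congrArg (fun u => (Y u).toAdd) hv
      simpa [map_mul, toAdd_mul] using this
    rw [r2_two _ hx, r2_two _ hy]
    ring
  · intro v hv
    have hx : (X v).toAdd + (r4 α.m * (X v).toAdd + r4 β.m * (Y v).toAdd) = 0 := by
      have := congrArg (fun u => (X u).toAdd) hv
      simpa [map_mul, toAdd_mul, hX' S v, ← hα, ← hβ] using this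
    have hy : (Y v).toAdd + (α.n * (X v).toAdd + β.n * (Y v).toAdd) = 0 := by
      have := congrArg (fun u => (Y u).toAdd) hv
      simpa [map_mul, toAdd_mul, hY' S v, ← hα, ← hβ] using this
    exact hker _ _ hx hy
  · rw [hXa0, hYa0, r2_one, r2_zero]; ring
  · rw [hXb0, hYb0, r2_one, r2_zero]; ring

end Work

open Work in
/-- `G₁` does not satisfy property (*). -/
theorem G1_not_satisfiesStar : ¬ SatisfiesStar G1 := by
  classical
  rintro ⟨Γ, _, f, hf, hidx, hgen⟩
  have hne_top : f.range ≠ ⊤ := by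
    intro h
    rw [h, Subgroup.index_top] at hidx
    norm_num at hidx
  -- there is an involution outside the range
  obtain ⟨t, ht2, htA⟩ : ∃ t : Γ, orderOf t = 2 ∧ t ∉ f.range := by
    by_contra h
    push_neg at h
    have hle : Subgroup.closure {x : Γ | orderOf x = 2} ≤ f.range :=
      (Subgroup.closure_le _).mpr (fun x hx => h x hx)
    rw [hgen] at hle
    exact hne_top (top_le_iff.mp hle)
  have htt : t * t = 1 := by
    have := pow_orderOf_eq_one t
    rwa [ht2, sq] at this
  have htinv : t⁻¹ = t := inv_eq_of_mul_eq_one_right htt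
  have hconj : ∀ g : Γ, g ∈ f.range → t * g * t⁻¹ ∈ f.range := by
    intro g hg
    have h1 : t * g ∉ f.range := by
      rw [Subgroup.mul_mem_iff_of_index_two hidx]
      simp [htA, hg]
    rw [Subgroup.mul_mem_iff_of_index_two hidx, htinv]
    simp [h1, htA]
  -- the conjugation automorphism pulled back to G1
  let c : Γ →* Γ := (MulAut.conj t).toMonoidHom
  have hcf : ∀ v : G1, c (f v) ∈ f.range := fun v => hconj _ ⟨v, rfl⟩
  let E : G1 ≃* f.range := MonoidHom.ofInjective hf
  have hEsymm : ∀ (u : Γ) (hu : u ∈ f.range), f (E.symm ⟨u, hu⟩) = u := fun u hu =>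
    MonoidHom.apply_ofInjective_symm hf _
  let S : G1 →* G1 := E.symm.toMonoidHom.comp ((c.comp f).codRestrict f.range hcf)
  have hfS : ∀ v, f (S v) = t * f v * t⁻¹ := by
    intro v
    show f (E.symm ⟨c (f v), hcf v⟩) = _
    rw [hEsymm]
    simp [c]
  have hSS : ∀ v, S (S v) = v := by
    intro v
    apply hf
    rw [hfS, hfS, htinv]
    calc t * (t * f v * t) * t = t * (t * (f v * (t * t))) := by
          simp only [mul_assoc]
      _ = f v := by rw [htt]; simp [← mul_assoc, htt]
  obtain ⟨ε1, ε2, hne, hinv, hsq, hK, hna, hnb⟩ := exists_eps S hSS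
  -- the ZMod 2 valued invariant
  set ρfun : G1 → ZMod 2 :=
    fun v => ε1 * r2 (X v).toAdd + ε2 * r2 (Y v).toAdd with hρfun
  have hρmul : ∀ u v : G1, ρfun (u * v) = ρfun u + ρfun v := by
    intro u v
    simp only [hρfun, map_mul, toAdd_mul, r2_add]
    ring
  have hρone : ρfun 1 = 0 := by
    simp only [hρfun, map_one, toAdd_one, r2_zero]
    ring
  let Φ : ∀ u : Γ, u ∈ f.range → ZMod 2 := fun u hu => ρfun (E.symm ⟨u, hu⟩)
  have hΦmul : ∀ u v huv hu hv, Φ (u * v) huv = Φ u hu + Φ v hv := by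
    intro u v huv hu hv
    have h0 : (⟨u * v, huv⟩ : f.range) = ⟨u, hu⟩ * ⟨v, hv⟩ := Subtype.ext rfl
    show ρfun (E.symm ⟨u * v, huv⟩) = ρfun (E.symm ⟨u, hu⟩) + ρfun (E.symm ⟨v, hv⟩)
    rw [h0, map_mul, hρmul]
  have hΦf : ∀ v : G1, Φ (f v) ⟨v, rfl⟩ = ρfun v := by
    intro v
    have h0 : E.symm ⟨f v, ⟨v, rfl⟩⟩ = v := by
      apply hf
      exact hEsymm _ _
    show ρfun (E.symm ⟨f v, ⟨v, rfl⟩⟩) = ρfun v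
    rw [h0]
  have hΦf' : ∀ (u : Γ) (hu : u ∈ f.range) (v : G1), f v = u → Φ u hu = ρfun v := by
    intro u hu v hv
    subst hv
    exact hΦf v
  have hΦconj : ∀ u hu huc, Φ (t * u * t⁻¹) huc = Φ u hu := by
    intro u hu huc
    set v := E.symm ⟨u, hu⟩ with hv
    have hfv : f v = u := hEsymm u hu
    have h1 : t * u * t⁻¹ = f (S v) := by rw [hfS, hfv]
    have h2 : E.symm ⟨t * u * t⁻¹, huc⟩ = S v := by
      apply hf
      rw [hEsymm, h1]
    show ρfun (E.symm ⟨t * u * t⁻¹, huc⟩) = ρfun (E.symm ⟨u, hu⟩)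
    rw [h2]
    exact hinv v
  -- the invariant as a function on Γ
  let ψ : Γ → ZMod 2 := fun g =>
    if h : g ∈ f.range then Φ g h
    else Φ (g * t) (by rw [Subgroup.mul_mem_iff_of_index_two hidx]; simp [h, htA])
  have hψmul : ∀ g h : Γ, ψ (g * h) = ψ g + ψ h := by
    intro g h
    by_cases hg : g ∈ f.range <;> by_cases hh : h ∈ f.range
    · have hgh : g * h ∈ f.range := mul_mem hg hh
      simp only [ψ, dif_pos hg, dif_pos hh, dif_pos hgh]
      exact hΦmul g h hgh hg hh
    · have hgh : g * h ∉ f.range := by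
        rw [Subgroup.mul_mem_iff_of_index_two hidx]
        simp [hg, hh]
      have hht : h * t ∈ f.range := by
        rw [Subgroup.mul_mem_iff_of_index_two hidx]
        simp [hh, htA]
      simp only [ψ, dif_pos hg, dif_neg hh, dif_neg hgh]
      have he : g * h * t = g * (h * t) := by rw [mul_assoc]
      have hproof : g * h * t ∈ f.range := by
        rw [he]; exact mul_mem hg hht
      have : Φ (g * h * t) hproof = Φ g hg + Φ (h * t) hht := by
        have h2 : Φ (g * h * t) hproof = Φ (g * (h * t)) (by rw [← he]; exact hproof) := by
          congr 1
        rw [h2]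
        exact hΦmul _ _ _ hg hht
      exact this
    · have hgh : g * h ∉ f.range := by
        rw [Subgroup.mul_mem_iff_of_index_two hidx]
        simp [hg, hh]
      have hgt : g * t ∈ f.range := by
        rw [Subgroup.mul_mem_iff_of_index_two hidx]
        simp [hg, htA]
      simp only [ψ, dif_pos hh, dif_neg hg, dif_neg hgh]
      have hconjh : t * h * t⁻¹ ∈ f.range := hconj h hh
      have he : g * h * t = (g * t) * (t * h * t⁻¹) := by
        rw [htinv]
        calc g * h * t = g * (1 * h) * t := by rw [one_mul]
          _ = g * (t * t * h) * t := by rw [htt]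
          _ = g * t * (t * h * t) := by simp only [mul_assoc]
      have hproof : g * h * t ∈ f.range := by rw [he]; exact mul_mem hgt hconjh
      have : Φ (g * h * t) hproof = Φ (g * t) hgt + Φ (t * h * t⁻¹) hconjh := by
        have h2 : Φ (g * h * t) hproof
            = Φ ((g * t) * (t * h * t⁻¹)) (by rw [← he]; exact hproof) := by congr 1
        rw [h2]
        exact hΦmul _ _ _ hgt hconjh
      exact this.trans (by rw [hΦconj h hh hconjh])
    · have hgh : g * h ∈ f.range := by
        rw [Subgroup.mul_mem_iff_of_index_two hidx]
        simp [hg, hh]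
      have hgt : g * t ∈ f.range := by
        rw [Subgroup.mul_mem_iff_of_index_two hidx]
        simp [hg, htA]
      have hht : h * t ∈ f.range := by
        rw [Subgroup.mul_mem_iff_of_index_two hidx]
        simp [hh, htA]
      simp only [ψ, dif_pos hgh, dif_neg hg, dif_neg hh]
      have hconjht : t * (h * t) * t⁻¹ ∈ f.range := hconj _ hht
      have he : g * h = (g * t) * (t * (h * t) * t⁻¹) := by
        rw [htinv]
        calc g * h = g * (1 * h * 1) := by simp
          _ = g * (t * t * h * (t * t)) := by rw [htt]
          _ = g * t * (t * (h * t) * t) := by simp only [mul_assoc]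
      have : Φ (g * h) hgh = Φ (g * t) hgt + Φ (t * (h * t) * t⁻¹) hconjht := by
        have h2 : Φ (g * h) hgh
            = Φ ((g * t) * (t * (h * t) * t⁻¹)) (by rw [← he]; exact hgh) := by congr 1
        rw [h2]
        exact hΦmul _ _ _ hgt hconjht
      exact this.trans (by rw [hΦconj (h * t) hht hconjht])
  have hψinvol : ∀ x : Γ, orderOf x = 2 → ψ x = 0 := by
    intro x hx
    have hxx : x * x = 1 := by
      have := pow_orderOf_eq_one x
      rwa [hx, sq] at this
    by_cases h : x ∈ f.range
    · simp only [ψ, dif_pos h]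
      set v := E.symm ⟨x, h⟩ with hv
      have hfv : f v = x := hEsymm x h
      have : v * v = 1 := by
        apply hf
        rw [map_mul, map_one, hfv, hxx]
      exact hsq v this
    · simp only [ψ, dif_neg h]
      have hxt : x * t ∈ f.range := by
        rw [Subgroup.mul_mem_iff_of_index_two hidx]; simp [h, htA]
      set v := E.symm ⟨x * t, hxt⟩ with hv
      have hfv : f v = x * t := hEsymm _ hxt
      have : v * S v = 1 := by
        apply hf
        rw [map_mul, map_one, hfS, hfv, htinv]
        calc x * t * (t * (x * t) * t) = x * (t * t) * x * (t * t) := by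
              simp only [mul_assoc]
          _ = 1 := by rw [htt]; simp [hxx]
      exact hK v this
  -- assemble the subgroup and conclude
  let N : Subgroup Γ :=
    { carrier := {g | ψ g = 0}
      one_mem' := by
        have h1 : (1 : Γ) ∈ f.range := one_mem _
        show ψ 1 = 0
        simp only [ψ, dif_pos h1]
        exact (hΦf' 1 h1 1 (map_one f)).trans hρone
      mul_mem' := by
        intro a b ha hb
        show ψ (a * b) = 0
        rw [hψmul]
        simp only [Set.mem_setOf_eq] at ha hb
        rw [ha, hb, add_zero]
      inv_mem' := by
        intro a ha
        simp only [Set.mem_setOf_eq] at ha ⊢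
        have h1 : ψ (a * a⁻¹) = ψ a + ψ a⁻¹ := hψmul a a⁻¹
        rw [mul_inv_cancel, ha, zero_add] at h1
        rw [← h1]
        have h2 : (1 : Γ) ∈ f.range := one_mem _
        show ψ 1 = 0
        simp only [ψ, dif_pos h2]
        exact (hΦf' 1 h2 1 (map_one f)).trans hρone }
  have hle : Subgroup.closure {x : Γ | orderOf x = 2} ≤ N :=
    (Subgroup.closure_le _).mpr (fun x hx => hψinvol x hx)
  rw [hgen] at hle
  have hmem : ∀ g : Γ, ψ g = 0 := fun g => hle (Subgroup.mem_top g)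
  have hea : ε1 = 0 := by
    have h1 := hmem (f a₀)
    simp only [ψ, dif_pos (show f a₀ ∈ f.range from ⟨a₀, rfl⟩)] at h1
    have h2 : ρfun a₀ = 0 := (hΦf a₀).symm.trans h1
    rw [← hna]
    exact h2
  have heb : ε2 = 0 := by
    have h1 := hmem (f b₀)
    simp only [ψ, dif_pos (show f b₀ ∈ f.range from ⟨b₀, rfl⟩)] at h1
    have h2 : ρfun b₀ = 0 := (hΦf b₀).symm.trans h1
    rw [← hnb]
    exact h2
  exact hne ⟨hea, heb⟩
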